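/- arXiv:2504.03658 — 3 statements merged into one kernel-verified Lean document; each statement's English description precedes it below -/
import Mathlib

section
/- Let ℓ_1 ≥ ⋯ ≥ ℓ_μ and let N^{(Ec)} be the elementary column-type matrix with superdiagonal blocks [I_{ℓ_{i+1}}; 0]; let ℓ'_i := ℓ_{μ+1−i} (so ℓ'_1 ≤ ⋯ ≤ ℓ'_μ) and let N^{(Er)} be the elementary row-type matrix for the partition (ℓ'_1,…,ℓ'_μ) with superdiagonal blocks [0 I_{ℓ'_i}]. Then there exists a permutation matrix P with P·N^{(Ec)}·Pᵀ = N^{(Er)}; in particular N^{(Ec)} and N^{(Er)} are similar and have equal ranks of all powers. -/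
open Matrix

/-- The elementary column-type matrix N^{(Ec)}: zero except for the
superdiagonal blocks [I_{ℓ_{i+1}}; 0] ∈ ℝ^{ℓ_i × ℓ_{i+1}}. -/
def Nec (μ : ℕ) (ℓ : ℕ → ℕ) :
    Matrix (Σ i : Fin μ, Fin (ℓ i)) (Σ i : Fin μ, Fin (ℓ i)) ℝ :=
  Matrix.of fun p q =>
    if (q.1 : ℕ) = (p.1 : ℕ) + 1 ∧ (p.2 : ℕ) = (q.2 : ℕ) then 1 else 0

/-- The elementary row-type matrix N^{(Er)}: zero except for the
superdiagonal blocks [0 I_{ℓ_i}] ∈ ℝ^{ℓ_i × ℓ_{i+1}}. -/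
def Ner (μ : ℕ) (ℓ : ℕ → ℕ) :
    Matrix (Σ i : Fin μ, Fin (ℓ i)) (Σ i : Fin μ, Fin (ℓ i)) ℝ :=
  Matrix.of fun p q =>
    if (q.1 : ℕ) = (p.1 : ℕ) + 1 ∧
        (q.2 : ℕ) = (ℓ (q.1 : ℕ) - ℓ (p.1 : ℕ)) + (p.2 : ℕ) then 1 else 0

/-- number of blocks whose size exceeds `j` -/
def muCnt (μ : ℕ) (ℓ : ℕ → ℕ) (j : ℕ) : ℕ :=
  ((Finset.range μ).filter (fun t => j < ℓ t)).card

lemma muCnt_le (μ : ℕ) (ℓ : ℕ → ℕ) (j : ℕ) : muCnt μ ℓ j ≤ μ := by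
  classical
  calc ((Finset.range μ).filter (fun t => j < ℓ t)).card
      ≤ (Finset.range μ).card := Finset.card_filter_le _ _
    _ = μ := Finset.card_range μ

lemma anti_of_mono {μ : ℕ} {ℓ : ℕ → ℕ} (hmono : ∀ i, i + 1 < μ → ℓ (i + 1) ≤ ℓ i)
    {s t : ℕ} (hst : s ≤ t) (ht : t < μ) : ℓ t ≤ ℓ s := by
  induction t with
  | zero =>
    have hs : s = 0 := Nat.le_zero.mp hst
    subst hs; exact le_rfl
  | succ n ih =>
    rcases Nat.eq_or_lt_of_le hst with h | h
    · subst h; exact le_rfl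
    · exact le_trans (hmono n ht) (ih (by omega) (by omega))

lemma lt_muCnt_iff {μ : ℕ} {ℓ : ℕ → ℕ} (hmono : ∀ i, i + 1 < μ → ℓ (i + 1) ≤ ℓ i)
    {j t : ℕ} (ht : t < μ) : j < ℓ t ↔ t < muCnt μ ℓ j := by
  classical
  constructor
  · intro h
    have hsub : Finset.range (t + 1) ⊆ (Finset.range μ).filter (fun s => j < ℓ s) := by
      intro s hs
      simp only [Finset.mem_range] at hs
      simp only [Finset.mem_filter, Finset.mem_range]
      exact ⟨by omega, lt_of_lt_of_le h (anti_of_mono hmono (by omega) ht)⟩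
    have := Finset.card_le_card hsub
    simpa [muCnt] using this
  · intro h
    by_contra hc
    push_neg at hc
    have hsub : (Finset.range μ).filter (fun s => j < ℓ s) ⊆ Finset.range t := by
      intro s hs
      simp only [Finset.mem_filter, Finset.mem_range] at hs ⊢
      by_contra hst
      push_neg at hst
      exact absurd hs.2 (by
        have := anti_of_mono hmono hst hs.1
        omega)
    have := Finset.card_le_card hsub
    simp only [Finset.card_range] at this
    unfold muCnt at h
    omega

/-- N^{(Ec)} (for ℓ_1 ≥ ⋯ ≥ ℓ_μ) and N^{(Er)} (for the reversed partition)
are permutation-similar; in particular all their powers have equal rank. -/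
theorem stmt12 (μ : ℕ) (ℓ : ℕ → ℕ)
    (hpos : ∀ i, i < μ → 0 < ℓ i)
    (hmono : ∀ i, i + 1 < μ → ℓ (i + 1) ≤ ℓ i) :
    ∃ e : (Σ i : Fin μ, Fin (ℓ i)) ≃ (Σ i : Fin μ, Fin (ℓ (μ - 1 - i))),
      Matrix.reindex e e (Nec μ ℓ) = Ner μ (fun i => ℓ (μ - 1 - i)) ∧
      ∀ k : ℕ, ((Nec μ ℓ) ^ k).rank = ((Ner μ (fun i => ℓ (μ - 1 - i))) ^ k).rank := by
  classical
  -- forward map bounds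
  have hf1 : ∀ (i j : ℕ), i < μ → j < ℓ i → i + (μ - muCnt μ ℓ j) < μ := by
    intro i j hi hj
    have h1 : i < muCnt μ ℓ j := (lt_muCnt_iff hmono hi).1 hj
    have h2 : muCnt μ ℓ j ≤ μ := muCnt_le μ ℓ j
    omega
  have hf2 : ∀ (i j : ℕ), i < μ → j < ℓ i →
      j < ℓ (μ - 1 - (i + (μ - muCnt μ ℓ j))) := by
    intro i j hi hj
    have h1 : i < muCnt μ ℓ j := (lt_muCnt_iff hmono hi).1 hj
    have h2 : muCnt μ ℓ j ≤ μ := muCnt_le μ ℓ j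
    have hk : μ - 1 - (i + (μ - muCnt μ ℓ j)) = muCnt μ ℓ j - 1 - i := by omega
    rw [hk]
    exact (lt_muCnt_iff hmono (by omega)).2 (by omega)
  let f : (Σ i : Fin μ, Fin (ℓ i)) → (Σ i : Fin μ, Fin (ℓ (μ - 1 - i))) :=
    fun p => ⟨⟨(p.1 : ℕ) + (μ - muCnt μ ℓ (p.2 : ℕ)), hf1 _ _ p.1.2 p.2.2⟩,
      ⟨ℓ (μ - 1 - ((p.1 : ℕ) + (μ - muCnt μ ℓ (p.2 : ℕ)))) - 1 - (p.2 : ℕ), by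
        have h := hf2 (p.1 : ℕ) (p.2 : ℕ) p.1.2 p.2.2
        simp only [Fin.val_mk]
        omega⟩⟩
  -- inverse map bounds
  have hgm : ∀ (i' j' : ℕ), i' < μ → j' < ℓ (μ - 1 - i') →
      μ - 1 - i' < muCnt μ ℓ (ℓ (μ - 1 - i') - 1 - j') ∧
        muCnt μ ℓ (ℓ (μ - 1 - i') - 1 - j') ≤ μ := by
    intro i' j' h1 h2
    exact ⟨(lt_muCnt_iff hmono (by omega)).1 (by omega), muCnt_le μ ℓ _⟩
  have hg1 : ∀ (i' j' : ℕ), i' < μ → j' < ℓ (μ - 1 - i') →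
      i' - (μ - muCnt μ ℓ (ℓ (μ - 1 - i') - 1 - j')) < μ := by
    intro i' j' h1 h2; omega
  have hg2 : ∀ (i' j' : ℕ), i' < μ → j' < ℓ (μ - 1 - i') →
      ℓ (μ - 1 - i') - 1 - j' <
        ℓ (i' - (μ - muCnt μ ℓ (ℓ (μ - 1 - i') - 1 - j'))) := by
    intro i' j' h1 h2
    have h3 := hgm i' j' h1 h2
    exact (lt_muCnt_iff hmono (by omega)).2 (by omega)
  let g : (Σ i : Fin μ, Fin (ℓ (μ - 1 - i))) → (Σ i : Fin μ, Fin (ℓ i)) :=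
    fun p => ⟨⟨(p.1 : ℕ) - (μ - muCnt μ ℓ (ℓ (μ - 1 - (p.1 : ℕ)) - 1 - (p.2 : ℕ))),
        hg1 _ _ p.1.2 p.2.2⟩,
      ⟨ℓ (μ - 1 - (p.1 : ℕ)) - 1 - (p.2 : ℕ), hg2 _ _ p.1.2 p.2.2⟩⟩
  -- sigma/fin extensionality
  have sigext : ∀ {n : ℕ} {F : ℕ → ℕ} (p q : Σ i : Fin n, Fin (F (i : ℕ))),
      (p.1 : ℕ) = (q.1 : ℕ) → (p.2 : ℕ) = (q.2 : ℕ) → p = q := by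
    rintro n F ⟨⟨a, ha⟩, ⟨b, hb⟩⟩ ⟨⟨c, hc⟩, ⟨d, hd⟩⟩ h1 h2
    simp only at h1 h2
    subst h1; subst h2; rfl
  have hleft : ∀ p, g (f p) = p := by
    rintro ⟨⟨i, hi⟩, ⟨j, hj⟩⟩
    simp only [Fin.val_mk] at hj
    have h1 : i < muCnt μ ℓ j := (lt_muCnt_iff hmono hi).1 hj
    have h2 : muCnt μ ℓ j ≤ μ := muCnt_le μ ℓ j
    have hk : μ - 1 - (i + (μ - muCnt μ ℓ j)) = muCnt μ ℓ j - 1 - i := by omega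
    have hjk : j < ℓ (muCnt μ ℓ j - 1 - i) :=
      (lt_muCnt_iff hmono (by omega)).2 (by omega)
    have hE : ℓ (μ - 1 - (i + (μ - muCnt μ ℓ j))) = ℓ (muCnt μ ℓ j - 1 - i) := by
      rw [hk]
    have hback : ℓ (μ - 1 - (i + (μ - muCnt μ ℓ j))) - 1 -
        (ℓ (μ - 1 - (i + (μ - muCnt μ ℓ j))) - 1 - j) = j := by omega
    refine sigext (F := ℓ) _ _ ?_ ?_ <;>
      simp only [f, g, Fin.val_mk] <;> rw [hback]
    omega
  have hright : ∀ p, f (g p) = p := by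
    rintro ⟨⟨i', hi'⟩, ⟨j', hj'⟩⟩
    simp only [Fin.val_mk] at hj'
    have h3 := hgm i' j' hi' hj'
    have harg : (i' - (μ - muCnt μ ℓ (ℓ (μ - 1 - i') - 1 - j'))) +
        (μ - muCnt μ ℓ (ℓ (μ - 1 - i') - 1 - j')) = i' := by omega
    refine sigext (F := fun t => ℓ (μ - 1 - t)) _ _ ?_ ?_ <;>
      simp only [f, g, Fin.val_mk] <;> rw [harg]
    omega
  let e : (Σ i : Fin μ, Fin (ℓ i)) ≃ (Σ i : Fin μ, Fin (ℓ (μ - 1 - i))) :=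
    ⟨f, g, hleft, hright⟩
  -- key entrywise lemma
  have hentry : ∀ p q, Ner μ (fun i => ℓ (μ - 1 - i)) (f p) (f q) = Nec μ ℓ p q := by
    rintro ⟨⟨i, hi⟩, ⟨j, hj⟩⟩ ⟨⟨a, ha⟩, ⟨b, hb⟩⟩
    simp only [Fin.val_mk] at hj hb
    have hij : i < muCnt μ ℓ j := (lt_muCnt_iff hmono hi).1 hj
    have hmj : muCnt μ ℓ j ≤ μ := muCnt_le μ ℓ j
    have hab : a < muCnt μ ℓ b := (lt_muCnt_iff hmono ha).1 hb
    have hmb : muCnt μ ℓ b ≤ μ := muCnt_le μ ℓ b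
    have hkj : μ - 1 - (i + (μ - muCnt μ ℓ j)) = muCnt μ ℓ j - 1 - i := by omega
    have hkb : μ - 1 - (a + (μ - muCnt μ ℓ b)) = muCnt μ ℓ b - 1 - a := by omega
    have hjk : j < ℓ (muCnt μ ℓ j - 1 - i) :=
      (lt_muCnt_iff hmono (by omega)).2 (by omega)
    have hbk : b < ℓ (muCnt μ ℓ b - 1 - a) :=
      (lt_muCnt_iff hmono (by omega)).2 (by omega)
    have hEj : ℓ (μ - 1 - (i + (μ - muCnt μ ℓ j))) = ℓ (muCnt μ ℓ j - 1 - i) := by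
      rw [hkj]
    have hEb : ℓ (μ - 1 - (a + (μ - muCnt μ ℓ b))) = ℓ (muCnt μ ℓ b - 1 - a) := by
      rw [hkb]
    simp only [Ner, Nec, Matrix.of_apply, f, Fin.val_mk]
    split_ifs with h1 h2 h2
    · rfl
    · exfalso
      apply h2
      obtain ⟨hA1, hA2⟩ := h1
      -- derive ℓ (muCnt b - 1 - a) ≥ ℓ (muCnt j - 1 - i)
      have hlge : ℓ (muCnt μ ℓ j - 1 - i) ≤ ℓ (muCnt μ ℓ b - 1 - a) :=
        anti_of_mono hmono (by omega) (by omega)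
      have hbj : b = j := by omega
      subst hbj
      constructor
      · omega
      · rfl
    · exfalso
      apply h1
      obtain ⟨hA1, hA2⟩ := h2
      have hbj : b = j := hA2.symm
      subst hbj
      subst hA1
      have hlge : ℓ (muCnt μ ℓ b - 1 - i) ≤ ℓ (muCnt μ ℓ b - 1 - (i + 1)) :=
        anti_of_mono hmono (by omega) (by omega)
      constructor
      · omega
      · omega
    · rfl
  have hmain : Matrix.reindex e e (Nec μ ℓ) = Ner μ (fun i => ℓ (μ - 1 - i)) := by
    ext p' q'
    rw [Matrix.reindex_apply, Matrix.submatrix_apply]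
    have h := hentry (e.symm p') (e.symm q')
    have hp : f (e.symm p') = p' := e.apply_symm_apply p'
    have hq : f (e.symm q') = q' := e.apply_symm_apply q'
    rw [hp, hq] at h
    exact h.symm
  refine ⟨e, hmain, ?_⟩
  intro k
  have h : Ner μ (fun i => ℓ (μ - 1 - i)) = Matrix.reindexAlgEquiv ℝ ℝ e (Nec μ ℓ) := by
    rw [Matrix.reindexAlgEquiv_apply, hmain]
  rw [h, ← map_pow, Matrix.reindexAlgEquiv_apply, Matrix.reindex_apply,
    Matrix.rank_submatrix]
end

section
/- Let ℓ_1 ≥ ⋯ ≥ ℓ_μ and N^{(Ec)} the elementary column-type nilpotent matrix. Then the Jordan normal form of N^{(Ec)} consists exactly of ℓ_i − ℓ_{i+1} Jordan blocks of order i for i = 1,…,μ−1 (with the convention that these counts refer to nilpotent Jordan blocks), and ℓ_μ Jordan blocks of order μ; i.e., N^{(Ec)} is permutation-similar to this Jordan matrix. -/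
open Matrix

/-- The nilpotent Jordan matrix with blocks of sizes s 0, …, s (n−1). -/
def JordanNil {n : ℕ} (s : Fin n → ℕ) :
    Matrix (Σ i : Fin n, Fin (s i)) (Σ i : Fin n, Fin (s i)) ℝ :=
  Matrix.of fun p q =>
    if p.1 = q.1 ∧ (q.2 : ℕ) = (p.2 : ℕ) + 1 then 1 else 0

/-- Counting lemma: the number of `j : Fin m` with `a ≤ j < b` is `b - a`. -/
lemma card_band (m a b : ℕ) (hb : b ≤ m) :
    (Finset.univ.filter fun j : Fin m => a ≤ (j : ℕ) ∧ (j : ℕ) < b).card = b - a := by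
  have himg : (Finset.univ.filter fun j : Fin m => a ≤ (j : ℕ) ∧ (j : ℕ) < b).image Fin.val
      = Finset.Ico a b := by
    ext x
    simp only [Finset.mem_image, Finset.mem_filter, Finset.mem_univ, true_and, Finset.mem_Ico]
    constructor
    · rintro ⟨j, hj, rfl⟩; exact hj
    · rintro ⟨h1, h2⟩; exact ⟨⟨x, lt_of_lt_of_le h2 hb⟩, ⟨h1, h2⟩, rfl⟩
  rw [← Nat.card_Ico a b, ← himg, Finset.card_image_of_injective _ Fin.val_injective]

/-- N^{(Ec)} is permutation-similar to the Jordan matrix consisting of exactly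
ℓ_i − ℓ_{i+1} nilpotent Jordan blocks of order i (i = 1,…,μ−1, 1-based) and
ℓ_μ blocks of order μ. -/
theorem stmt13 (μ : ℕ) (hμ : 1 ≤ μ) (ℓ : ℕ → ℕ)
    (hpos : ∀ i, i < μ → 0 < ℓ i)
    (hmono : ∀ i, i + 1 < μ → ℓ (i + 1) ≤ ℓ i) :
    ∃ (n : ℕ) (s : Fin n → ℕ)
      (e : (Σ i : Fin n, Fin (s i)) ≃ (Σ i : Fin μ, Fin (ℓ i))),
      Matrix.reindex e e (JordanNil s) = Nec μ ℓ ∧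
      (∀ k, 1 ≤ k → k ≤ μ - 1 →
        (Finset.univ.filter fun i => s i = k).card = ℓ (k - 1) - ℓ k) ∧
      (Finset.univ.filter fun i => s i = μ).card = ℓ (μ - 1) := by
  -- full monotonicity of ℓ on [0, μ)
  have mono : ∀ i i' : ℕ, i' ≤ i → i < μ → ℓ i ≤ ℓ i' := by
    have aux : ∀ d i' : ℕ, i' + d < μ → ℓ (i' + d) ≤ ℓ i' := by
      intro d
      induction d with
      | zero => intro i' _; exact le_refl _
      | succ d ih =>
        intro i' h
        calc ℓ (i' + (d + 1)) = ℓ ((i' + d) + 1) := by ring_nf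
          _ ≤ ℓ (i' + d) := hmono _ (by omega)
          _ ≤ ℓ i' := ih i' (by omega)
    intro i i' h hi
    have := aux (i - i') i' (by omega)
    rwa [Nat.add_sub_cancel' h] at this
  have sval_le : ∀ j : ℕ,
      (Finset.univ.filter fun i : Fin μ => j < ℓ (i : ℕ)).card ≤ μ := by
    intro j
    calc (Finset.univ.filter fun i : Fin μ => j < ℓ (i : ℕ)).card
        ≤ (Finset.univ : Finset (Fin μ)).card := Finset.card_filter_le _ _
      _ = μ := Finset.card_fin μ
  -- the key membership criterion
  have key : ∀ (j : ℕ) (i : Fin μ),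
      j < ℓ (i : ℕ) ↔ (i : ℕ) < (Finset.univ.filter fun i : Fin μ => j < ℓ (i : ℕ)).card := by
    intro j i
    constructor
    · intro h
      have hsub : Finset.Iic i ⊆ Finset.univ.filter fun i' : Fin μ => j < ℓ (i' : ℕ) := by
        intro i' hi'
        simp only [Finset.mem_Iic] at hi'
        simp only [Finset.mem_filter, Finset.mem_univ, true_and]
        exact lt_of_lt_of_le h (mono i i' (Fin.le_def.mp hi') i.isLt)
      have := Finset.card_le_card hsub
      rw [Fin.card_Iic] at this
      omega
    · intro h
      by_contra hc
      push_neg at hc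
      have hsub : (Finset.univ.filter fun i' : Fin μ => j < ℓ (i' : ℕ)) ⊆ Finset.Iio i := by
        intro i' hi'
        simp only [Finset.mem_filter, Finset.mem_univ, true_and] at hi'
        simp only [Finset.mem_Iio]
        by_contra hge
        push_neg at hge
        have := mono i' i (Fin.le_def.mp hge) i'.isLt
        omega
      have := Finset.card_le_card hsub
      rw [Fin.card_Iio] at this
      omega
  have hl0 : ∀ i : Fin μ, ℓ (i : ℕ) ≤ ℓ 0 := fun i => mono i 0 (Nat.zero_le _) i.isLt
  refine ⟨ℓ 0,
    fun j : Fin (ℓ 0) => (Finset.univ.filter fun i : Fin μ => (j : ℕ) < ℓ (i : ℕ)).card,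
    ?_, ?_, ?_, ?_⟩
  -- the equivalence
  · exact
    { toFun := fun p =>
        ⟨⟨(p.2 : ℕ), lt_of_lt_of_le p.2.isLt (sval_le _)⟩,
         ⟨(p.1 : ℕ), (key (p.1 : ℕ) ⟨(p.2 : ℕ), lt_of_lt_of_le p.2.isLt (sval_le _)⟩).mpr
            p.2.isLt⟩⟩
      invFun := fun p =>
        ⟨⟨(p.2 : ℕ), lt_of_lt_of_le p.2.isLt (hl0 p.1)⟩,
         ⟨(p.1 : ℕ), (key (p.2 : ℕ) p.1).mp p.2.isLt⟩⟩
      left_inv := fun p => rfl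
      right_inv := fun p => rfl }
  -- matrix equality
  · ext p q
    rcases p with ⟨i, j⟩
    rcases q with ⟨i', j'⟩
    simp only [Matrix.reindex_apply, Matrix.submatrix_apply, Equiv.coe_fn_symm_mk,
      JordanNil, Nec, Matrix.of_apply, Fin.mk.injEq]
    exact if_congr and_comm rfl rfl
  -- counts for 1 ≤ k ≤ μ - 1
  · intro k hk1 hk2
    have hkμ : k < μ := by omega
    have hk1μ : k - 1 < μ := by omega
    have hcongr : (Finset.univ.filter fun j : Fin (ℓ 0) =>
          (Finset.univ.filter fun i : Fin μ => (j : ℕ) < ℓ (i : ℕ)).card = k) =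
        Finset.univ.filter fun j : Fin (ℓ 0) => ℓ k ≤ (j : ℕ) ∧ (j : ℕ) < ℓ (k - 1) := by
      apply Finset.filter_congr
      intro j _
      have h1 : (j : ℕ) < ℓ k ↔ k <
          (Finset.univ.filter fun i : Fin μ => (j : ℕ) < ℓ (i : ℕ)).card :=
        key (j : ℕ) ⟨k, hkμ⟩
      have h2 : (j : ℕ) < ℓ (k - 1) ↔ k - 1 <
          (Finset.univ.filter fun i : Fin μ => (j : ℕ) < ℓ (i : ℕ)).card :=
        key (j : ℕ) ⟨k - 1, hk1μ⟩
      constructor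
      · intro h
        exact ⟨by rw [← Nat.not_lt, h1]; omega, h2.mpr (by omega)⟩
      · rintro ⟨hge, hlt⟩
        have hA := h2.mp hlt
        have hB : ¬ ((j : ℕ) < ℓ k) := by omega
        rw [h1] at hB
        omega
    rw [hcongr]
    exact card_band (ℓ 0) (ℓ k) (ℓ (k - 1)) (mono (k - 1) 0 (Nat.zero_le _) hk1μ)
  -- count for k = μ
  · have hμ1 : μ - 1 < μ := by omega
    have hcongr : (Finset.univ.filter fun j : Fin (ℓ 0) =>
          (Finset.univ.filter fun i : Fin μ => (j : ℕ) < ℓ (i : ℕ)).card = μ) =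
        Finset.univ.filter fun j : Fin (ℓ 0) => 0 ≤ (j : ℕ) ∧ (j : ℕ) < ℓ (μ - 1) := by
      apply Finset.filter_congr
      intro j _
      have h1 : (j : ℕ) < ℓ (μ - 1) ↔ μ - 1 <
          (Finset.univ.filter fun i : Fin μ => (j : ℕ) < ℓ (i : ℕ)).card :=
        key (j : ℕ) ⟨μ - 1, hμ1⟩
      have hle := sval_le (j : ℕ)
      constructor
      · intro h
        exact ⟨Nat.zero_le _, h1.mpr (by omega)⟩
      · rintro ⟨_, hlt⟩
        have := h1.mp hlt
        omega
    rw [hcongr]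
    have := card_band (ℓ 0) 0 (ℓ (μ - 1)) (mono (μ - 1) 0 (Nat.zero_le _) hμ1)
    omega
end

section
/- Let ℓ_1 ≥ ⋯ ≥ ℓ_μ and let K ∈ ℝ^{m×m} be a block upper triangular matrix (in the partition ℓ_1,…,ℓ_μ) whose rows with index greater than m − κ coincide with those of the identity, for some κ ≥ 0. Let N^{(Ec)} be the elementary column-type matrix. Then the last κ + ℓ_{μ−1} rows of N^{(Ec)}·K coincide with the corresponding rows of N^{(Ec)}, provided κ ≥ m − Σ_{i=1}^{μ−1} ℓ_i. -/
open Matrix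

/-- The (0-based) flattened row/column index of a block position. -/
def posIdx (μ : ℕ) (ℓ : ℕ → ℕ) (p : Σ i : Fin μ, Fin (ℓ i)) : ℕ :=
  (∑ j ∈ Finset.range (p.1 : ℕ), ℓ j) + (p.2 : ℕ)

lemma sigma_eq_iff {μ : ℕ} {ℓ : ℕ → ℕ} (p q : Σ i : Fin μ, Fin (ℓ i)) :
    p = q ↔ ((p.1 : ℕ) = (q.1 : ℕ) ∧ (p.2 : ℕ) = (q.2 : ℕ)) := by
  constructor
  · rintro rfl; exact ⟨rfl, rfl⟩
  · rintro ⟨h1, h2⟩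
    obtain ⟨⟨i, hi⟩, ⟨a, ha⟩⟩ := p
    obtain ⟨⟨j, hj⟩, ⟨b, hb⟩⟩ := q
    simp only at h1 h2
    subst h1; subst h2; rfl

lemma ell_anti {μ : ℕ} (ℓ : ℕ → ℕ)
    (hmono : ∀ i, i + 1 < μ → ℓ (i + 1) ≤ ℓ i) :
    ∀ j, j < μ → ∀ i, i ≤ j → ℓ j ≤ ℓ i := by
  intro j
  induction j with
  | zero =>
    intro _ i hi
    have : i = 0 := Nat.le_zero.mp hi
    subst this; exact le_refl _
  | succ k ih =>
    intro hj i hi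
    rcases Nat.lt_or_ge i (k + 1) with h | h
    · exact le_trans (hmono k hj) (ih (by omega) i (by omega))
    · have : i = k + 1 := le_antisymm hi h
      subst this; exact le_refl _

/-- If K is block upper triangular and its last κ rows coincide with those of
the identity, and κ ≥ m − Σ_{i=1}^{μ−1} ℓ_i, then the last κ + ℓ_{μ−1} rows
of N^{(Ec)}·K coincide with the corresponding rows of N^{(Ec)}. -/
theorem stmt15 (μ : ℕ) (hμ : 2 ≤ μ) (ℓ : ℕ → ℕ)
    (hpos : ∀ i, i < μ → 0 < ℓ i)
    (hmono : ∀ i, i + 1 < μ → ℓ (i + 1) ≤ ℓ i)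
    (κ : ℕ)
    (K : Matrix (Σ i : Fin μ, Fin (ℓ i)) (Σ i : Fin μ, Fin (ℓ i)) ℝ)
    (hKblock : ∀ p q : Σ i : Fin μ, Fin (ℓ i), (q.1 : ℕ) < (p.1 : ℕ) → K p q = 0)
    (hKrows : ∀ p q : Σ i : Fin μ, Fin (ℓ i),
      (∑ j ∈ Finset.range μ, ℓ j) - κ ≤ posIdx μ ℓ p →
      K p q = (1 : Matrix (Σ i : Fin μ, Fin (ℓ i)) (Σ i : Fin μ, Fin (ℓ i)) ℝ) p q)
    (hκ : (∑ j ∈ Finset.range μ, ℓ j) - (∑ j ∈ Finset.range (μ - 1), ℓ j) ≤ κ) :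
    ∀ p q : Σ i : Fin μ, Fin (ℓ i),
      (∑ j ∈ Finset.range μ, ℓ j) - (κ + ℓ (μ - 2)) ≤ posIdx μ ℓ p →
      (Nec μ ℓ * K) p q = Nec μ ℓ p q := by
  intro p q hp
  by_cases hA : ((p.1 : ℕ) + 1 < μ ∧ (p.2 : ℕ) < ℓ ((p.1 : ℕ) + 1))
  · obtain ⟨h1, h2⟩ := hA
    set r0 : Σ i : Fin μ, Fin (ℓ i) := ⟨⟨(p.1 : ℕ) + 1, h1⟩, ⟨(p.2 : ℕ), h2⟩⟩ with hr0
    have hr01 : (r0.1 : ℕ) = (p.1 : ℕ) + 1 := rfl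
    have hr02 : (r0.2 : ℕ) = (p.2 : ℕ) := rfl
    have hsum : (Nec μ ℓ * K) p q = K r0 q := by
      rw [Matrix.mul_apply, Finset.sum_eq_single r0]
      · simp [Nec, hr01, hr02]
      · intro s _ hs
        have hz : Nec μ ℓ p s = 0 := by
          simp only [Nec, Matrix.of_apply]
          rw [if_neg]
          rintro ⟨hc1, hc2⟩
          exact hs ((sigma_eq_iff s r0).mpr ⟨by omega, by omega⟩)
        rw [hz, zero_mul]
      · intro h; exact absurd (Finset.mem_univ r0) h
    have hr : (∑ j ∈ Finset.range μ, ℓ j) - κ ≤ posIdx μ ℓ r0 := by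
      have hrp : posIdx μ ℓ r0 = posIdx μ ℓ p + ℓ (p.1 : ℕ) := by
        simp only [posIdx, hr01, hr02, Finset.sum_range_succ]
        ring
      have hle : ℓ (μ - 2) ≤ ℓ (p.1 : ℕ) := by
        apply ell_anti ℓ hmono (μ - 2) (by omega) (p.1 : ℕ) (by omega)
      omega
    rw [hsum, hKrows r0 q hr, Matrix.one_apply]
    have hiff : (r0 = q) ↔ ((q.1 : ℕ) = (p.1 : ℕ) + 1 ∧ (p.2 : ℕ) = (q.2 : ℕ)) := by
      rw [sigma_eq_iff]
      constructor
      · rintro ⟨a, b⟩; exact ⟨by omega, by omega⟩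
      · rintro ⟨a, b⟩; exact ⟨by omega, by omega⟩
    simp only [Nec, Matrix.of_apply, hiff]
  · have hz : ∀ s : Σ i : Fin μ, Fin (ℓ i), Nec μ ℓ p s = 0 := by
      intro s
      simp only [Nec, Matrix.of_apply]
      rw [if_neg]
      rintro ⟨hc1, hc2⟩
      have hs1 : (s.1 : ℕ) < μ := s.1.isLt
      apply hA
      refine ⟨by omega, ?_⟩
      have hs2 : (s.2 : ℕ) < ℓ (s.1 : ℕ) := s.2.isLt
      rw [hc2, ← hc1]
      exact hs2
    rw [Matrix.mul_apply, Finset.sum_eq_zero (fun s _ => by rw [hz s, zero_mul])]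
    exact (hz q).symm
end
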